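/- Output-feedback SLS controller formula for general direct feedthrough D (Corollary 5): Suppose S is a stability matrix for the output-feedback realization R with controller K, and assume Φxx is invertible. Then Syy − Syx * Φxx⁻¹ * Φxy is invertible; setting K₀ := Φuy − Φux * Φxx⁻¹ * Φxy, the matrix 1 + D * K₀ is invertible and the controller satisfies K = K₀ * (1 + D * K₀)⁻¹. -/

import Mathlib

open Matrix

noncomputable section

set_option synthInstance.maxHeartbeats 1000000
set_option maxHeartbeats 1000000

/-- A 3×3 block matrix. -/
def b3 {α n₁ n₂ n₃ m₁ m₂ m₃ : Type*}
    (M₁₁ : Matrix n₁ m₁ α) (M₁₂ : Matrix n₁ m₂ α) (M₁₃ : Matrix n₁ m₃ α)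
    (M₂₁ : Matrix n₂ m₁ α) (M₂₂ : Matrix n₂ m₂ α) (M₂₃ : Matrix n₂ m₃ α)
    (M₃₁ : Matrix n₃ m₁ α) (M₃₂ : Matrix n₃ m₂ α) (M₃₃ : Matrix n₃ m₃ α) :
    Matrix (n₁ ⊕ n₂ ⊕ n₃) (m₁ ⊕ m₂ ⊕ m₃) α :=
  Matrix.fromBlocks M₁₁ (Matrix.fromCols M₁₂ M₁₃)
    (Matrix.fromRows M₂₁ M₃₁) (Matrix.fromBlocks M₂₂ M₂₃ M₃₂ M₃₃)

/-- A real constant matrix regarded as a matrix of rational transfer functions. -/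
def mR {n m : Type*} (M : Matrix n m ℝ) : Matrix n m (RatFunc ℝ) :=
  M.map (algebraMap ℝ (RatFunc ℝ))

/-- The transfer-function variable `z`. -/
def zz : RatFunc ℝ := RatFunc.X

section Aux

set_option linter.unusedSectionVars false

variable {α n₁ n₂ n₃ m₁ m₂ m₃ l₁ l₂ l₃ : Type*} [CommRing α]
  [Fintype m₁] [Fintype m₂] [Fintype m₃]

lemma fromRows_add' (A : Matrix n₁ m₁ α) (B : Matrix n₂ m₁ α) (C : Matrix n₁ m₁ α)
    (D : Matrix n₂ m₁ α) : fromRows A B + fromRows C D = fromRows (A + C) (B + D) := by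
  ext (i|i) j <;> simp

lemma fromCols_add' (A : Matrix n₁ m₁ α) (B : Matrix n₁ m₂ α) (C : Matrix n₁ m₁ α)
    (D : Matrix n₁ m₂ α) :
    fromCols A B + fromCols C D = fromCols (A + C) (B + D) := by
  ext i (j|j) <;> simp

lemma b3_mul
    (A₁₁ : Matrix n₁ m₁ α) (A₁₂ : Matrix n₁ m₂ α) (A₁₃ : Matrix n₁ m₃ α)
    (A₂₁ : Matrix n₂ m₁ α) (A₂₂ : Matrix n₂ m₂ α) (A₂₃ : Matrix n₂ m₃ α)
    (A₃₁ : Matrix n₃ m₁ α) (A₃₂ : Matrix n₃ m₂ α) (A₃₃ : Matrix n₃ m₃ α)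
    (B₁₁ : Matrix m₁ l₁ α) (B₁₂ : Matrix m₁ l₂ α) (B₁₃ : Matrix m₁ l₃ α)
    (B₂₁ : Matrix m₂ l₁ α) (B₂₂ : Matrix m₂ l₂ α) (B₂₃ : Matrix m₂ l₃ α)
    (B₃₁ : Matrix m₃ l₁ α) (B₃₂ : Matrix m₃ l₂ α) (B₃₃ : Matrix m₃ l₃ α) :
    b3 A₁₁ A₁₂ A₁₃ A₂₁ A₂₂ A₂₃ A₃₁ A₃₂ A₃₃ * b3 B₁₁ B₁₂ B₁₃ B₂₁ B₂₂ B₂₃ B₃₁ B₃₂ B₃₃ =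
    b3 (A₁₁*B₁₁ + A₁₂*B₂₁ + A₁₃*B₃₁) (A₁₁*B₁₂ + A₁₂*B₂₂ + A₁₃*B₃₂) (A₁₁*B₁₃ + A₁₂*B₂₃ + A₁₃*B₃₃)
       (A₂₁*B₁₁ + A₂₂*B₂₁ + A₂₃*B₃₁) (A₂₁*B₁₂ + A₂₂*B₂₂ + A₂₃*B₃₂) (A₂₁*B₁₃ + A₂₂*B₂₃ + A₂₃*B₃₃)
       (A₃₁*B₁₁ + A₃₂*B₂₁ + A₃₃*B₃₁) (A₃₁*B₁₂ + A₃₂*B₂₂ + A₃₃*B₃₂) (A₃₁*B₁₃ + A₃₂*B₂₃ + A₃₃*B₃₃) := by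
  simp only [b3, fromBlocks_multiply, fromCols_mul_fromRows, fromRows_mul,
    mul_fromCols, fromCols_mul_fromBlocks, fromBlocks_mul_fromRows,
    fromBlocks_add, fromRows_add', fromCols_add', add_assoc,
    fromRows_fromCols_eq_fromBlocks]
  ext (i|i|i) (j|j|j) <;> simp [fromBlocks]

lemma b3_one [DecidableEq m₁] [DecidableEq m₂] [DecidableEq m₃] :
    (1 : Matrix (m₁ ⊕ m₂ ⊕ m₃) (m₁ ⊕ m₂ ⊕ m₃) α) = b3 1 0 0 0 1 0 0 0 1 := by
  simp [b3, ← fromBlocks_one, ← fromBlocks_zero, fromRows_fromCols_eq_fromBlocks]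

lemma b3_sub
    (A₁₁ B₁₁ : Matrix n₁ m₁ α) (A₁₂ B₁₂ : Matrix n₁ m₂ α) (A₁₃ B₁₃ : Matrix n₁ m₃ α)
    (A₂₁ B₂₁ : Matrix n₂ m₁ α) (A₂₂ B₂₂ : Matrix n₂ m₂ α) (A₂₃ B₂₃ : Matrix n₂ m₃ α)
    (A₃₁ B₃₁ : Matrix n₃ m₁ α) (A₃₂ B₃₂ : Matrix n₃ m₂ α) (A₃₃ B₃₃ : Matrix n₃ m₃ α) :
    b3 A₁₁ A₁₂ A₁₃ A₂₁ A₂₂ A₂₃ A₃₁ A₃₂ A₃₃ - b3 B₁₁ B₁₂ B₁₃ B₂₁ B₂₂ B₂₃ B₃₁ B₃₂ B₃₃ =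
    b3 (A₁₁-B₁₁) (A₁₂-B₁₂) (A₁₃-B₁₃) (A₂₁-B₂₁) (A₂₂-B₂₂) (A₂₃-B₂₃)
       (A₃₁-B₃₁) (A₃₂-B₃₂) (A₃₃-B₃₃) := by
  ext (i|i|i) (j|j|j) <;> simp [b3, fromBlocks]

lemma b3_inj
    {A₁₁ B₁₁ : Matrix n₁ m₁ α} {A₁₂ B₁₂ : Matrix n₁ m₂ α} {A₁₃ B₁₃ : Matrix n₁ m₃ α}
    {A₂₁ B₂₁ : Matrix n₂ m₁ α} {A₂₂ B₂₂ : Matrix n₂ m₂ α} {A₂₃ B₂₃ : Matrix n₂ m₃ α}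
    {A₃₁ B₃₁ : Matrix n₃ m₁ α} {A₃₂ B₃₂ : Matrix n₃ m₂ α} {A₃₃ B₃₃ : Matrix n₃ m₃ α}
    (h : b3 A₁₁ A₁₂ A₁₃ A₂₁ A₂₂ A₂₃ A₃₁ A₃₂ A₃₃ = b3 B₁₁ B₁₂ B₁₃ B₂₁ B₂₂ B₂₃ B₃₁ B₃₂ B₃₃) :
    A₁₁ = B₁₁ ∧ A₁₂ = B₁₂ ∧ A₁₃ = B₁₃ ∧ A₂₁ = B₂₁ ∧ A₂₂ = B₂₂ ∧ A₂₃ = B₂₃ ∧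
    A₃₁ = B₃₁ ∧ A₃₂ = B₃₂ ∧ A₃₃ = B₃₃ := by
  rw [b3, b3, fromBlocks_inj, fromCols_ext_iff, fromRows_ext_iff, fromBlocks_inj] at h
  tauto

end Aux

/-- **Output-feedback SLS controller formula for general direct feedthrough `D`**
(Corollary 5).  If `S` is a stability matrix for the output-feedback realization with
controller `K` and `Φxx` is invertible, then `Syy - Syx Φxx⁻¹ Φxy` is invertible, and
with `K₀ := Φuy - Φux Φxx⁻¹ Φxy`, the matrix `1 + D K₀` is invertible and
`K = K₀ (1 + D K₀)⁻¹`. -/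
theorem of_sls_controller_formula {n m p : Type*} [Fintype n] [Fintype m] [Fintype p]
    [DecidableEq n] [DecidableEq m] [DecidableEq p]
    (A : Matrix n n ℝ) (B : Matrix n m ℝ) (C : Matrix p n ℝ) (D : Matrix p m ℝ)
    (K : Matrix m p (RatFunc ℝ))
    (Φxx : Matrix n n (RatFunc ℝ)) (Sxu : Matrix n m (RatFunc ℝ)) (Φxy : Matrix n p (RatFunc ℝ))
    (Φux : Matrix m n (RatFunc ℝ)) (Suu : Matrix m m (RatFunc ℝ)) (Φuy : Matrix m p (RatFunc ℝ))
    (Syx : Matrix p n (RatFunc ℝ)) (Syu : Matrix p m (RatFunc ℝ)) (Syy : Matrix p p (RatFunc ℝ))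
    (hL : (1 - b3 (mR A + (1 - zz) • (1 : Matrix n n (RatFunc ℝ))) (mR B)
            (0 : Matrix n p (RatFunc ℝ))
            (0 : Matrix m n (RatFunc ℝ)) (0 : Matrix m m (RatFunc ℝ)) K
            (mR C) (mR D) (0 : Matrix p p (RatFunc ℝ))) *
          b3 Φxx Sxu Φxy Φux Suu Φuy Syx Syu Syy = 1)
    (hR : b3 Φxx Sxu Φxy Φux Suu Φuy Syx Syu Syy *
          (1 - b3 (mR A + (1 - zz) • (1 : Matrix n n (RatFunc ℝ))) (mR B)
            (0 : Matrix n p (RatFunc ℝ))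
            (0 : Matrix m n (RatFunc ℝ)) (0 : Matrix m m (RatFunc ℝ)) K
            (mR C) (mR D) (0 : Matrix p p (RatFunc ℝ))) = 1)
    (hΦxx : IsUnit Φxx) :
    let K₀ := Φuy - Φux * Φxx⁻¹ * Φxy
    IsUnit (Syy - Syx * Φxx⁻¹ * Φxy) ∧
    IsUnit ((1 : Matrix p p (RatFunc ℝ)) + mR D * K₀) ∧
    K = K₀ * ((1 : Matrix p p (RatFunc ℝ)) + mR D * K₀)⁻¹ := by
  intro K₀
  have hK₀def : K₀ = Φuy - Φux * Φxx⁻¹ * Φxy := rfl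
  clear hR
  rw [b3_one (α := RatFunc ℝ), b3_sub, b3_mul] at hL
  obtain ⟨e11, e12, e13, e21, e22, e23, e31, e32, e33⟩ := b3_inj hL
  simp only [sub_zero, zero_sub, sub_self, Matrix.zero_mul, Matrix.one_mul,
    Matrix.neg_mul, add_zero, zero_add, neg_zero] at e21 e23 e31 e33
  have hux : Φux = K * Syx := by rwa [add_neg_eq_zero] at e21
  have huy : Φuy = K * Syy := by rwa [add_neg_eq_zero] at e23
  have hyx : Syx = mR C * Φxx + mR D * Φux := by
    rw [← sub_eq_zero]
    calc Syx - (mR C * Φxx + mR D * Φux)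
        = -(mR C * Φxx) + -(mR D * Φux) + Syx := by abel
      _ = 0 := e31
  have hyy : Syy = 1 + mR C * Φxy + mR D * Φuy := by
    rw [← sub_eq_zero]
    calc Syy - (1 + mR C * Φxy + mR D * Φuy)
        = (-(mR C * Φxy) + -(mR D * Φuy) + Syy) - 1 := by abel
      _ = 0 := by rw [e33, sub_self]
  clear hL e11 e12 e13 e21 e22 e23 e31 e32 e33
  -- key algebra
  have hdet : IsUnit Φxx.det := (Matrix.isUnit_iff_isUnit_det _).mp hΦxx
  have h1 : Φxx * Φxx⁻¹ = 1 := Matrix.mul_nonsing_inv _ hdet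
  have hPD : Syy - Syx * Φxx⁻¹ * Φxy = 1 + mR D * K₀ := by
    rw [hK₀def, hyy, hyx]
    have h2 : (mR C * Φxx + mR D * Φux) * Φxx⁻¹ * Φxy
        = mR C * Φxy + mR D * (Φux * Φxx⁻¹ * Φxy) := by
      rw [Matrix.add_mul, Matrix.add_mul, Matrix.mul_assoc (mR C) Φxx Φxx⁻¹, h1,
        Matrix.mul_one, Matrix.mul_assoc, Matrix.mul_assoc, Matrix.mul_assoc]
    rw [h2, Matrix.mul_sub]
    abel
  have hK0P : K₀ = K * (Syy - Syx * Φxx⁻¹ * Φxy) := by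
    rw [hK₀def, Matrix.mul_sub, huy, hux, Matrix.mul_assoc, Matrix.mul_assoc,
      ← Matrix.mul_assoc Syx]
  have hQP : (1 - mR D * K) * (Syy - Syx * Φxx⁻¹ * Φxy) = 1 := by
    rw [Matrix.sub_mul, Matrix.one_mul, Matrix.mul_assoc (mR D) K _, ← hK0P, hPD]
    abel
  have hPQ : (Syy - Syx * Φxx⁻¹ * Φxy) * (1 - mR D * K) = 1 :=
    mul_eq_one_comm.mp hQP
  have hPunit : IsUnit (Syy - Syx * Φxx⁻¹ * Φxy) :=
    ⟨⟨_, 1 - mR D * K, hPQ, hQP⟩, rfl⟩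
  refine ⟨hPunit, hPD ▸ hPunit, ?_⟩
  rw [← hPD, hK0P, Matrix.mul_assoc,
    Matrix.mul_nonsing_inv _ ((Matrix.isUnit_iff_isUnit_det _).mp hPunit), Matrix.mul_one]

end
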